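/- Let k ≥ 5 be an integer, K := k - 3, and let φ be a satisfiable E3-CNF formula with m clauses C_1, …, C_m over variables x_1, …, x_n. Let y_1, …, y_K be fresh variables and, for i ∈ [K], let H_i be the Horn clause over y_1,…,y_K whose only positive literal is y_i, i.e., H_i = ¬y_1 ∨ ⋯ ∨ ¬y_{i-1} ∨ y_i ∨ ¬y_{i+1} ∨ ⋯ ∨ ¬y_K. Let ψ be the Ek-CNF formula consisting of the K·m clauses C_j ∨ H_i for j ∈ [m], i ∈ [K], and let α_start be the all-ones assignment and α_end the all-zeros assignment over the n+K variables. Then α_start and α_end satisfy ψ, and if φ is satisfiable then opt_ψ(α_start ↔ α_end) = 1. -/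

import Mathlib

/-- An assignment maps each Boolean variable to a truth value. -/
abbrev Assignment (V : Type) := V → Bool

/-- A literal is a variable together with a polarity (`true` = positive);
a clause is a disjunction of literals, represented as the list of its literals
(its width is the length of this list). -/
abbrev Clause (V : Type) := List (V × Bool)

/-- A CNF formula is a conjunction of clauses, represented as a list
(clauses are counted with multiplicity). -/
abbrev CNF (V : Type) := List (Clause V)

/-- An assignment satisfies a clause if it makes at least one literal true. -/
def satClause {V : Type} (α : Assignment V) (C : Clause V) : Bool :=
  C.any fun l => α l.1 == l.2

/-- An assignment satisfies a CNF formula if it satisfies every clause. -/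
def satCNF {V : Type} (α : Assignment V) (φ : CNF V) : Bool :=
  φ.all fun C => satClause α C

/-- The fraction of clauses of `φ` satisfied by `α`. -/
noncomputable def val {V : Type} (φ : CNF V) (α : Assignment V) : ℝ :=
  ((φ.filter fun C => satClause α C).length : ℝ) / (φ.length : ℝ)

/-- The number of clauses of `φ` violated by `α`. -/
def numViol {V : Type} (φ : CNF V) (α : Assignment V) : ℕ :=
  (φ.filter fun C => !satClause α C).length

/-- Two assignments differ on at most one variable. -/
def Adjacent {V : Type} (α β : Assignment V) : Prop :=
  ∀ v w, α v ≠ β v → α w ≠ β w → v = w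

/-- `seq` is a reconfiguration sequence from `s` to `e`: a nonempty finite sequence of
assignments starting at `s`, ending at `e`, in which consecutive assignments differ
on at most one variable. -/
def IsReconfSeq {V : Type} (s e : Assignment V) (seq : List (Assignment V)) : Prop :=
  seq ≠ [] ∧ seq.head? = some s ∧ seq.getLast? = some e ∧ seq.Chain' Adjacent

/-- The value of a reconfiguration sequence: the minimum of `val φ` over its members. -/
noncomputable def seqVal {V : Type} (φ : CNF V) (seq : List (Assignment V)) : ℝ :=
  sInf (val φ '' {α | α ∈ seq})

/-- `opt_φ(s ↔ e)`: the optimal (maximum) value over all reconfiguration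
sequences from `s` to `e`. -/
noncomputable def optVal {V : Type} (φ : CNF V) (s e : Assignment V) : ℝ :=
  sSup (seqVal φ '' {seq | IsReconfSeq s e seq})

/-- Completeness of the Horn-clause reduction (`k ≥ 5`, `K := k - 3`):
`ψ` consists of the `K·m` clauses `C_j ∨ H_i` where `H_i` is the Horn clause over the fresh
variables `y₁, …, y_K` whose only positive literal is `y_i`; `αs` is the all-ones assignment
and `αe` the all-zeros assignment on the `n + K` variables. Then `αs` and `αe` satisfy `ψ`,
and if `φ` is satisfiable then `opt_ψ(αs ↔ αe) = 1`. -/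


theorem head?_scanl {α β : Type*} (f : β → α → β) (b : β) (l : List α) :
    (List.scanl f b l).head? = some b := by cases l <;> simp [List.scanl_nil, List.scanl_cons]

theorem getLast?_scanl {α β : Type*} (f : β → α → β) (b : β) (l : List α) :
    (List.scanl f b l).getLast? = some (List.foldl f b l) := by
  induction l generalizing b with
  | nil => simp
  | cons a l ih =>
    rw [List.scanl_cons, List.foldl_cons, ← ih (f b a)]
    rcases h : List.scanl f (f b a) l with _ | ⟨c, t⟩
    · exact absurd (head?_scanl f (f b a) l) (by simp [h])
    · simp

theorem chain'_scanl {α β : Type*} (R : β → β → Prop) (f : β → α → β)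
    (h : ∀ c a, R c (f c a)) (b : β) (l : List α) :
    (List.scanl f b l).Chain' R := by
  induction l generalizing b with
  | nil => exact List.isChain_singleton b
  | cons a l ih =>
    rw [List.scanl_cons]
    refine List.IsChain.cons (ih _) ?_
    intro y hy
    rw [head?_scanl, Option.mem_some_iff] at hy
    exact hy ▸ h b a

theorem mem_scanl_inv {α β : Type*} {f : β → α → β} {P : β → Prop} {b : β} {l : List α}
    (hb : P b) (hstep : ∀ c a, a ∈ l → P c → P (f c a)) :
    ∀ x ∈ List.scanl f b l, P x := by
  induction l generalizing b with
  | nil => intro x hx; rw [List.scanl_nil, List.mem_singleton] at hx; exact hx ▸ hb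
  | cons a l ih =>
    intro x hx
    rw [List.scanl_cons] at hx
    rcases List.mem_cons.mp hx with hx | hx
    · exact hx ▸ hb
    · exact ih (hstep b a (by simp) hb) (fun c a' ha' => hstep c a' (by simp [ha'])) x hx

theorem mem_scanl_append {α β : Type*} (f : β → α → β) (b : β) (l₁ l₂ : List α) :
    ∀ x ∈ List.scanl f b (l₁ ++ l₂),
      x ∈ List.scanl f b l₁ ∨ x ∈ List.scanl f (List.foldl f b l₁) l₂ := by
  induction l₁ generalizing b with
  | nil => intro x hx; right; simpa using hx
  | cons a l ih =>
    intro x hx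
    rw [List.cons_append, List.scanl_cons] at hx
    rcases List.mem_cons.mp hx with hx | hx
    · left; rw [List.scanl_cons]; exact List.mem_cons.mpr (Or.inl hx)
    · rcases ih (f b a) x hx with h | h
      · left; rw [List.scanl_cons]; exact List.mem_cons.mpr (Or.inr h)
      · right; simpa using h

def upd {V : Type} [DecidableEq V] (β : Assignment V) (p : V × Bool) : Assignment V :=
  Function.update β p.1 p.2

theorem foldl_upd_ne {V : Type} [DecidableEq V] (β : Assignment V) (l : List (V × Bool)) (y : V)
    (h : ∀ p ∈ l, p.1 ≠ y) : List.foldl upd β l y = β y := by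
  induction l generalizing β with
  | nil => rfl
  | cons p l ih =>
    rw [List.foldl_cons, ih _ (fun q hq => h q (by simp [hq]))]
    exact Function.update_of_ne (Ne.symm (h p (by simp))) _ _

theorem foldl_upd_mem {V W : Type} [DecidableEq V] (β : Assignment V) (emb : W → V)
    (hemb : Function.Injective emb) (g : W → Bool) (l : List W) (v : W) (hv : v ∈ l) :
    List.foldl upd β (l.map fun w => (emb w, g w)) (emb v) = g v := by
  induction l generalizing β with
  | nil => simp at hv
  | cons a l ih =>
    rw [List.map_cons, List.foldl_cons]
    by_cases h : v ∈ l
    · exact ih _ h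
    · have hva : v = a := by
        rcases List.mem_cons.mp hv with h' | h'
        · exact h'
        · exact absurd h' h
      subst hva
      rw [foldl_upd_ne]
      · simp [upd]
      · rintro p hp
        obtain ⟨w, hw, rfl⟩ := List.mem_map.mp hp
        intro he
        exact h (hemb he ▸ hw)


theorem stmt11 {n k : ℕ} (hk : 5 ≤ k) (φ : CNF (Fin n)) (hφ : 1 ≤ φ.length)
    (h3 : ∀ C ∈ φ, C.length = 3)
    (ψ : CNF (Fin n ⊕ Fin (k - 3)))
    (hψ : ψ = φ.flatMap fun C =>
        (List.finRange (k - 3)).map fun i =>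
          C.map (fun l => (Sum.inl l.1, l.2)) ++ List.ofFn fun t => (Sum.inr t, t == i))
    (αs αe : Assignment (Fin n ⊕ Fin (k - 3)))
    (hαs : αs = fun _ => true) (hαe : αe = fun _ => false) :
    satCNF αs ψ ∧ satCNF αe ψ ∧ ((∃ α, satCNF α φ) → optVal ψ αs αe = 1) := by
  classical
  have hK2 : 2 ≤ k - 3 := by omega
  have mem_ψ : ∀ D ∈ ψ, ∃ C ∈ φ, ∃ i : Fin (k - 3),
      D = C.map (fun l => ((Sum.inl l.1 : Fin n ⊕ Fin (k - 3)), l.2)) ++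
          List.ofFn fun t => (Sum.inr t, t == i) := by
    intro D hD
    rw [hψ, List.mem_flatMap] at hD
    obtain ⟨C, hC, hD⟩ := hD
    obtain ⟨i, _, rfl⟩ := List.mem_map.mp hD
    exact ⟨C, hC, i, rfl⟩
  have sat_true : ∀ β : Assignment (Fin n ⊕ Fin (k - 3)),
      (∀ t, β (Sum.inr t) = true) → satCNF β ψ := by
    intro β hβ
    rw [satCNF, List.all_eq_true]
    intro D hD
    obtain ⟨C, hC, i, rfl⟩ := mem_ψ D hD
    rw [satClause, List.any_eq_true]
    refine ⟨(Sum.inr i, i == i), List.mem_append.mpr (Or.inr ?_), by simp [hβ]⟩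
    rw [List.mem_ofFn]
    exact ⟨i, rfl⟩
  have sat_false : ∀ β : Assignment (Fin n ⊕ Fin (k - 3)),
      (∀ t, β (Sum.inr t) = false) → satCNF β ψ := by
    intro β hβ
    rw [satCNF, List.all_eq_true]
    intro D hD
    obtain ⟨C, hC, i, rfl⟩ := mem_ψ D hD
    rw [satClause, List.any_eq_true]
    obtain ⟨t, ht⟩ : ∃ t : Fin (k - 3), t ≠ i := by
      rcases eq_or_ne i ⟨0, by omega⟩ with h | h
      · exact ⟨⟨1, by omega⟩, by simp [h, Fin.ext_iff]⟩
      · exact ⟨⟨0, by omega⟩, Ne.symm h⟩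
    refine ⟨(Sum.inr t, t == i), List.mem_append.mpr (Or.inr ?_), ?_⟩
    · rw [List.mem_ofFn]; exact ⟨t, rfl⟩
    · have hti : (t == i) = false := beq_eq_false_iff_ne.mpr ht
      simp [hβ, hti]
  subst hαs hαe
  refine ⟨sat_true _ (fun t => rfl), sat_false _ (fun t => rfl), ?_⟩
  rintro ⟨α, hα⟩
  have sat_mid : ∀ β : Assignment (Fin n ⊕ Fin (k - 3)),
      (∀ v, β (Sum.inl v) = α v) → satCNF β ψ := by
    intro β hβ
    rw [satCNF, List.all_eq_true]
    intro D hD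
    obtain ⟨C, hC, i, rfl⟩ := mem_ψ D hD
    rw [satClause, List.any_eq_true]
    have hsatC := List.all_eq_true.mp hα C hC
    rw [satClause, List.any_eq_true] at hsatC
    obtain ⟨l, hl, hsat⟩ := hsatC
    refine ⟨(Sum.inl l.1, l.2), List.mem_append.mpr (Or.inl (List.mem_map.mpr ⟨l, hl, rfl⟩)), ?_⟩
    simpa [hβ] using hsat
  -- the explicit reconfiguration sequence
  set b0 : Assignment (Fin n ⊕ Fin (k - 3)) := fun _ => true with hb0
  set e0 : Assignment (Fin n ⊕ Fin (k - 3)) := fun _ => false with he0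
  set L1 : List ((Fin n ⊕ Fin (k - 3)) × Bool) :=
    (List.finRange n).map fun v => (Sum.inl v, α v) with hL1
  set L2 : List ((Fin n ⊕ Fin (k - 3)) × Bool) :=
    (List.finRange (k - 3)).map fun t => ((Sum.inr t : Fin n ⊕ Fin (k - 3)), false) with hL2
  set L3 : List ((Fin n ⊕ Fin (k - 3)) × Bool) :=
    (List.finRange n).map fun v => ((Sum.inl v : Fin n ⊕ Fin (k - 3)), false) with hL3
  set b1 := List.foldl upd b0 L1 with hb1
  set b2 := List.foldl upd b1 L2 with hb2
  have hL1fst : ∀ p ∈ L1, ∃ v : Fin n, p.1 = Sum.inl v := by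
    rintro p hp
    obtain ⟨v, _, rfl⟩ := List.mem_map.mp hp
    exact ⟨v, rfl⟩
  have hL2fst : ∀ p ∈ L2, ∃ t : Fin (k - 3), p.1 = Sum.inr t := by
    rintro p hp
    obtain ⟨t, _, rfl⟩ := List.mem_map.mp hp
    exact ⟨t, rfl⟩
  have hL3fst : ∀ p ∈ L3, ∃ v : Fin n, p.1 = Sum.inl v := by
    rintro p hp
    obtain ⟨v, _, rfl⟩ := List.mem_map.mp hp
    exact ⟨v, rfl⟩
  have hb1inl : ∀ v, b1 (Sum.inl v) = α v := fun v =>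
    foldl_upd_mem b0 Sum.inl Sum.inl_injective α _ v (List.mem_finRange v)
  have hb1inr : ∀ t, b1 (Sum.inr t) = true := by
    intro t
    rw [hb1, foldl_upd_ne]
    rintro p hp
    obtain ⟨v, hv⟩ := hL1fst p hp
    simp [hv]
  have hb2inr : ∀ t, b2 (Sum.inr t) = false := fun t =>
    foldl_upd_mem b1 Sum.inr Sum.inr_injective (fun _ => false) _ t (List.mem_finRange t)
  have hb2inl : ∀ v, b2 (Sum.inl v) = α v := by
    intro v
    rw [hb2, foldl_upd_ne]
    · exact hb1inl v
    · rintro p hp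
      obtain ⟨t, ht⟩ := hL2fst p hp
      simp [ht]
  have hb3inl : ∀ v, List.foldl upd b2 L3 (Sum.inl v) = false := fun v =>
    foldl_upd_mem b2 Sum.inl Sum.inl_injective (fun _ => false) _ v (List.mem_finRange v)
  have hb3inr : ∀ t, List.foldl upd b2 L3 (Sum.inr t) = false := by
    intro t
    rw [foldl_upd_ne]
    · exact hb2inr t
    · rintro p hp
      obtain ⟨v, hv⟩ := hL3fst p hp
      simp [hv]
  set seq := List.scanl upd b0 (L1 ++ (L2 ++ L3)) with hseq
  have hadj : ∀ (c : Assignment (Fin n ⊕ Fin (k - 3))) p, Adjacent c (upd c p) := by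
    intro c p
    have key : ∀ x, c x ≠ upd c p x → x = p.1 := by
      intro x hx
      by_contra h
      exact hx (Function.update_of_ne h _ _).symm
    intro v w hv hw
    rw [key v hv, key w hw]
  have hre : IsReconfSeq b0 e0 seq := by
    refine ⟨?_, head?_scanl _ _ _, ?_, chain'_scanl _ _ hadj _ _⟩
    · intro h
      have := head?_scanl upd b0 (L1 ++ (L2 ++ L3))
      rw [hseq] at h
      rw [h] at this
      simp at this
    · rw [hseq, getLast?_scanl, List.foldl_append, List.foldl_append, ← hb1, ← hb2]
      congr 1
      funext x
      cases x with
      | inl v => exact hb3inl v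
      | inr t => exact hb3inr t
  have hsat_all : ∀ x ∈ seq, satCNF x ψ := by
    intro x hx
    rcases mem_scanl_append upd b0 L1 (L2 ++ L3) x hx with h | h
    · refine sat_true x (mem_scanl_inv (P := fun β => ∀ t, β (Sum.inr t) = true)
        (fun t => rfl) ?_ x h)
      intro c p hp hc t
      obtain ⟨v, hv⟩ := hL1fst p hp
      rw [upd, hv, Function.update_of_ne (by simp)]
      exact hc t
    · rw [← hb1] at h
      rcases mem_scanl_append upd b1 L2 L3 x h with h2 | h2
      · refine sat_mid x (mem_scanl_inv (P := fun β => ∀ v, β (Sum.inl v) = α v)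
          hb1inl ?_ x h2)
        intro c p hp hc v
        obtain ⟨t, ht⟩ := hL2fst p hp
        rw [upd, ht, Function.update_of_ne (by simp)]
        exact hc v
      · rw [← hb2] at h2
        refine sat_false x (mem_scanl_inv (P := fun β => ∀ t, β (Sum.inr t) = false)
          hb2inr ?_ x h2)
        intro c p hp hc t
        obtain ⟨v, hv⟩ := hL3fst p hp
        rw [upd, hv, Function.update_of_ne (by simp)]
        exact hc t
  have hψpos : 0 < ψ.length := by
    rcases φ with _ | ⟨C, φ'⟩
    · simp at hφ
    · rw [hψ, List.flatMap_cons, List.length_append, List.length_map, List.length_finRange]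
      omega
  have val_one : ∀ β, satCNF β ψ → val ψ β = 1 := by
    intro β hβ
    rw [val, List.filter_eq_self.mpr (List.all_eq_true.mp hβ)]
    exact div_self (by exact_mod_cast hψpos.ne')
  have val_le : ∀ β, val ψ β ≤ 1 := by
    intro β
    rw [val]
    apply div_le_one_of_le₀
    · exact_mod_cast List.length_filter_le _ _
    · positivity
  have val_nonneg : ∀ β, 0 ≤ val ψ β := by
    intro β
    rw [val]
    positivity
  have hseqval : seqVal ψ seq = 1 := by
    rw [seqVal]
    have himg : val ψ '' {x | x ∈ seq} = {1} := by
      apply Set.Subset.antisymm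
      · rintro _ ⟨x, hx, rfl⟩
        exact val_one x (hsat_all x hx)
      · rintro x rfl
        exact ⟨b0, List.mem_of_mem_head? (by rw [hseq, head?_scanl]; rfl),
          val_one b0 (sat_true b0 fun t => rfl)⟩
    rw [himg, csInf_singleton]
  have hub : ∀ x ∈ seqVal ψ '' {σ | IsReconfSeq b0 e0 σ}, x ≤ 1 := by
    rintro _ ⟨σ, hσ, rfl⟩
    obtain ⟨hne, -, -, -⟩ := hσ
    rcases σ with _ | ⟨h0, σ'⟩
    · exact absurd rfl hne
    refine le_trans (csInf_le ⟨0, ?_⟩ ⟨h0, by simp, rfl⟩) (val_le h0)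
    rintro _ ⟨x, -, rfl⟩
    exact val_nonneg x
  rw [optVal]
  apply le_antisymm
  · exact csSup_le ⟨1, ⟨seq, hre, hseqval⟩⟩ hub
  · exact le_csSup ⟨1, hub⟩ ⟨seq, hre, hseqval⟩
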